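/- Let D ∈ ℚ[x] be monic and squarefree of degree 2g+2, and suppose a, b ∈ ℚ[x] with a^2 - D·b^2 = k, where k ∈ ℚ is nonzero and not a square in ℚ, and deg a = m > g. Let c = √k generate the quadratic extension ℚ(c). Then D factors over ℚ(c) as a product of two polynomials of degree g+1 that are conjugate under the nontrivial automorphism of ℚ(c)/ℚ. -/

import Mathlib

open Polynomial

theorem stmt_12 (g m : ℕ) (D a b : ℚ[X]) (hD : D.Monic) (hsf : Squarefree D)
    (hdeg : D.natDegree = 2*g + 2) (k : ℚ) (hk : k ≠ 0) (hks : ¬ IsSquare k)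
    (huk : a^2 - D * b^2 = C k) (hm : a.natDegree = m) (hmg : g < m)
    (K : Type) [Field K] [Algebra ℚ K] (c : K) (hc : c^2 = algebraMap ℚ K k)
    (hgen : Algebra.adjoin ℚ ({c} : Set K) = ⊤) :
    ∃ σ : K ≃ₐ[ℚ] K, σ c = -c ∧
      ∃ p : K[X], p.natDegree = g + 1 ∧
        D.map (algebraMap ℚ K) = p * p.map (σ : K →+* K) := by
  classical
  -- construct σ
  set f : ℚ[X] := X ^ 2 - C k with hf
  have hirr : Irreducible f := by
    apply X_pow_sub_C_irreducible_of_prime Nat.prime_two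
    intro r hr
    exact hks ⟨r, by rw [← hr]; ring⟩
  haveI : Fact (Irreducible f) := ⟨hirr⟩
  have haevc : aeval c f = 0 := by simp [hf, ← hc]
  have haevc' : aeval (-c) f = 0 := by simp [hf, ← hc]
  set φ : AdjoinRoot f →ₐ[ℚ] K := AdjoinRoot.liftAlgHom f (Algebra.ofId ℚ K) c haevc with hφ
  have hφroot : φ (AdjoinRoot.root f) = c := AdjoinRoot.liftAlgHom_root f (Algebra.ofId ℚ K) c haevc
  have hφsurj : Function.Surjective φ := by
    rw [← AlgHom.range_eq_top, eq_top_iff, ← hgen]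
    apply Algebra.adjoin_le
    intro x hx
    rw [Set.mem_singleton_iff] at hx
    exact hx ▸ ⟨AdjoinRoot.root f, hφroot⟩
  set e : AdjoinRoot f ≃ₐ[ℚ] K :=
    AlgEquiv.ofBijective φ ⟨φ.toRingHom.injective, hφsurj⟩ with hedef
  have he : ∀ x, e x = φ x := fun _ => rfl
  set ψ : AdjoinRoot f →ₐ[ℚ] K := AdjoinRoot.liftAlgHom f (Algebra.ofId ℚ K) (-c) haevc' with hψ
  have hψroot : ψ (AdjoinRoot.root f) = -c := AdjoinRoot.liftAlgHom_root f (Algebra.ofId ℚ K) (-c) haevc'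
  set τ : K →ₐ[ℚ] K := ψ.comp (e.symm : K →ₐ[ℚ] AdjoinRoot f) with hτ
  have hesymm : e.symm c = AdjoinRoot.root f := by
    apply e.injective; rw [AlgEquiv.apply_symm_apply, he, hφroot]
  have hτc : τ c = -c := by
    show ψ (e.symm c) = -c
    rw [hesymm, hψroot]
  have hττ : τ.comp τ = AlgHom.id ℚ K := by
    have hle : Algebra.adjoin ℚ ({c} : Set K) ≤
        AlgHom.equalizer (τ.comp τ) (AlgHom.id ℚ K) := by
      apply Algebra.adjoin_le
      intro x hx
      rw [Set.mem_singleton_iff] at hx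
      subst hx
      rw [SetLike.mem_coe, AlgHom.mem_equalizer, AlgHom.comp_apply, hτc, map_neg, hτc, AlgHom.id_apply, neg_neg]
    rw [hgen] at hle
    ext x
    exact hle (by trivial)
  set σ : K ≃ₐ[ℚ] K := AlgEquiv.ofAlgHom τ τ hττ hττ with hσ
  have hσc : σ c = -c := hτc
  have hσσ : ∀ x : K, σ (σ x) = x := fun x => congrFun (congrArg DFunLike.coe hττ) x
  refine ⟨σ, hσc, ?_⟩
  -- polynomial part
  set ρ : ℚ →+* K := algebraMap ℚ K with hρ
  set S : K →+* K := (σ : K →+* K) with hS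
  have hSc : S c = -c := hσc
  have hSρ : S.comp ρ = ρ := RingHom.ext fun q => σ.commutes q
  have hSS : S.comp S = RingHom.id K := RingHom.ext fun x => hσσ x
  have hfix : ∀ r : ℚ[X], (r.map ρ).map S = r.map ρ := by
    intro r; rw [Polynomial.map_map, hSρ]
  have hmm : ∀ r : K[X], (r.map S).map S = r := by
    intro r; rw [Polynomial.map_map, hSS, Polynomial.map_id]
  set DK : K[X] := D.map ρ with hDK
  set aK : K[X] := a.map ρ with haK
  set bK : K[X] := b.map ρ with hbK
  set u : K[X] := aK - C c with hu
  set v : K[X] := aK + C c with hv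
  have hc0 : c ≠ 0 := by
    intro h
    apply hk
    have : ρ k = ρ 0 := by rw [← hc, h]; simp
    exact ρ.injective this
  have key : DK * bK ^ 2 = u * v := by
    have h1 : aK ^ 2 - DK * bK ^ 2 = C (ρ k) := by
      have h0 := congrArg (Polynomial.map ρ) huk
      simpa [Polynomial.map_sub, Polynomial.map_mul, Polynomial.map_pow] using h0
    have h2 : (C (ρ k) : K[X]) = C c ^ 2 := by rw [← hc]; simp
    rw [hu, hv]
    linear_combination -h1 - h2
  have hdvd : DK ∣ u * v := ⟨bK ^ 2, key.symm⟩
  have hcop : IsCoprime u v := by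
    refine ⟨C (-(2 * c)⁻¹), C ((2 * c)⁻¹), ?_⟩
    have h20 : (2 : K) ≠ 0 := by
      intro h
      have h' : ρ (2 : ℚ) = ρ 0 := by simpa using h
      have := ρ.injective h'
      norm_num at this
    have h2c : (2 * c : K) ≠ 0 := mul_ne_zero h20 hc0
    have : (C (-(2 * c)⁻¹)) * u + (C ((2 * c)⁻¹)) * v
        = C ((2 * c)⁻¹ * (2 * c)) := by
      rw [hu, hv, map_neg, map_mul, map_mul, map_ofNat]
      ring
    rw [this, inv_mul_cancel₀ h2c, map_one]
  have hmapu : u.map S = v := by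
    rw [hu, hv, Polynomial.map_sub, Polynomial.map_C, hSc, haK, hfix, map_neg, sub_neg_eq_add]
  have hmapv : v.map S = u := by
    rw [hu, hv, Polynomial.map_add, Polynomial.map_C, hSc, haK, hfix, map_neg,
      ← sub_eq_add_neg]
  have hmapD : DK.map S = DK := hfix D
  have hDKm : DK.Monic := hD.map ρ
  have hDK0 : DK ≠ 0 := hDKm.ne_zero
  obtain ⟨p1, q1, hp1, hq1, hpq⟩ := exists_dvd_and_dvd_of_dvd_mul hdvd
  have hp10 : p1 ≠ 0 := fun h => hDK0 (by rw [hpq, h, zero_mul])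
  have hq10 : q1 ≠ 0 := fun h => hDK0 (by rw [hpq, h, mul_zero])
  set p : K[X] := p1 * C p1.leadingCoeff⁻¹ with hp
  set q : K[X] := q1 * C q1.leadingCoeff⁻¹ with hq
  have hpm : p.Monic := monic_mul_leadingCoeff_inv hp10
  have hqm : q.Monic := monic_mul_leadingCoeff_inv hq10
  have hlc : p1.leadingCoeff * q1.leadingCoeff = 1 := by
    have := hDKm
    rw [Monic, hpq, leadingCoeff_mul] at this
    exact this
  have hDKpq : DK = p * q := by
    rw [hp, hq, hpq]
    have h1 : (C p1.leadingCoeff⁻¹ * C q1.leadingCoeff⁻¹ : K[X]) = 1 := by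
      rw [← map_mul, ← mul_inv, hlc, inv_one, map_one]
    calc p1 * q1 = p1 * q1 * (C p1.leadingCoeff⁻¹ * C q1.leadingCoeff⁻¹) := by
          rw [h1, mul_one]
      _ = p1 * C p1.leadingCoeff⁻¹ * (q1 * C q1.leadingCoeff⁻¹) := by ring
  have hpu : p ∣ u := by
    obtain ⟨w, hw⟩ := hp1
    refine ⟨C p1.leadingCoeff * w, ?_⟩
    rw [hp, mul_assoc, ← mul_assoc (C p1.leadingCoeff⁻¹), ← map_mul,
      inv_mul_cancel₀ (leadingCoeff_ne_zero.mpr hp10), map_one, one_mul, ← hw]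
  have hqv : q ∣ v := by
    obtain ⟨w, hw⟩ := hq1
    refine ⟨C q1.leadingCoeff * w, ?_⟩
    rw [hq, mul_assoc, ← mul_assoc (C q1.leadingCoeff⁻¹), ← map_mul,
      inv_mul_cancel₀ (leadingCoeff_ne_zero.mpr hq10), map_one, one_mul, ← hw]
  have hσpv : p.map S ∣ v := by rw [← hmapu]; exact Polynomial.map_dvd S hpu
  have hσqu : q.map S ∣ u := by rw [← hmapv]; exact Polynomial.map_dvd S hqv
  have hσpD : p.map S ∣ p * q := by
    rw [← hDKpq, ← hmapD]
    exact Polynomial.map_dvd S ⟨q, hDKpq⟩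
  have hσqD : q.map S ∣ p * q := by
    rw [← hDKpq, ← hmapD]
    exact Polynomial.map_dvd S ⟨p, by rw [hDKpq, mul_comm]⟩
  have hcp1 : IsCoprime (p.map S) p :=
    ((hcop.of_isCoprime_of_dvd_left hpu).of_isCoprime_of_dvd_right hσpv).symm
  have hσpq : p.map S ∣ q := hcp1.dvd_of_dvd_mul_left hσpD
  have hcp2 : IsCoprime (q.map S) q :=
    (hcop.of_isCoprime_of_dvd_left hσqu).of_isCoprime_of_dvd_right hqv
  have hσqp : q.map S ∣ p := hcp2.dvd_of_dvd_mul_right hσqD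
  have hqσp : q ∣ p.map S := by
    have := Polynomial.map_dvd S hσqp
    rwa [hmm] at this
  have hqeq : q = p.map S :=
    eq_of_monic_of_associated hqm (hpm.map S) (associated_of_dvd_dvd hqσp hσpq)
  have hfact : DK = p * p.map S := by rw [hDKpq, hqeq]
  -- degrees
  have hdegDK : DK.natDegree = 2 * g + 2 := by
    rw [hDK, natDegree_map_eq_of_injective ρ.injective, hdeg]
  have hdegσp : (p.map S).natDegree = p.natDegree :=
    natDegree_map_eq_of_injective S.injective p
  have hsum : p.natDegree + (p.map S).natDegree = 2 * g + 2 := by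
    rw [← hdegDK, hfact, natDegree_mul hpm.ne_zero (hpm.map S).ne_zero]
  have hdegp : p.natDegree = g + 1 := by omega
  exact ⟨p, hdegp, hfact⟩
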